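/- Let I be a nonempty finite index set of size N, and for each i ∈ I let ψ_i : ℝ^m → ℂ be differentiable with ψ_i(θ) ≠ 0, and let E_i ∈ ℂ be constants. Fix θ₀ and define G(θ) = 2 Re[ ( Σ_{i∈I} (conj(ψ_i(θ))/conj(ψ_i(θ₀))) E_i ) / ( Σ_{i∈I} conj(ψ_i(θ))/conj(ψ_i(θ₀)) ) ]. Then the gradient of G at θ₀ equals ∇G(θ₀) = 2 Re[ (1/N) Σ_{i∈I} (∇conj(ψ_i)(θ₀)/conj(ψ_i(θ₀))) E_i − ( (1/N) Σ_{i∈I} E_i ) · ( (1/N) Σ_{i∈I} ∇conj(ψ_i)(θ₀)/conj(ψ_i(θ₀)) ) ]. -/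

import Mathlib

/-- SM equations (A20)–(A23) of the paper: the first-order efficient AD estimator
`G(θ) = 2 Re[(∑ i, (ψ_i*(θ)/ψ_i*(θ₀)) E_i) / (∑ i, ψ_i*(θ)/ψ_i*(θ₀))]`,
evaluated on a fixed finite sample set `I` of size `N` with detached local
energies `E_i`, has gradient at the base parameter `θ₀` equal to
`2 Re[(1/N) ∑ i (∇ψ_i*(θ₀)/ψ_i*(θ₀)) E_i − ((1/N) ∑ i E_i)((1/N) ∑ i ∇ψ_i*(θ₀)/ψ_i*(θ₀))]`. -/
theorem stmt_15 (I : Type*) [Fintype I] [Nonempty I] (m : ℕ)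
    (ψ : I → (Fin m → ℝ) → ℂ) (hψd : ∀ i, Differentiable ℝ (ψ i))
    (hψ : ∀ i θ, ψ i θ ≠ 0) (E : I → ℂ) (θ₀ : Fin m → ℝ)
    (G : (Fin m → ℝ) → ℝ)
    (hG : ∀ θ, G θ = 2 * (((∑ i, (starRingEnd ℂ (ψ i θ) / starRingEnd ℂ (ψ i θ₀)) * E i)
        / (∑ i, starRingEnd ℂ (ψ i θ) / starRingEnd ℂ (ψ i θ₀)))).re) :
    ∀ j : Fin m,
      fderiv ℝ G θ₀ (Pi.single j 1)
        = 2 * ((((Fintype.card I : ℂ))⁻¹ *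
              (∑ i, (fderiv ℝ (fun t => starRingEnd ℂ (ψ i t)) θ₀ (Pi.single j 1)
                  / starRingEnd ℂ (ψ i θ₀)) * E i)
            - (((Fintype.card I : ℂ))⁻¹ * (∑ i, E i)) *
              (((Fintype.card I : ℂ))⁻¹ *
                ∑ i, fderiv ℝ (fun t => starRingEnd ℂ (ψ i t)) θ₀ (Pi.single j 1)
                  / starRingEnd ℂ (ψ i θ₀))).re) := by
  intro j
  set v : Fin m → ℝ := Pi.single j 1 with hv
  set c : I → ℂ := fun i => starRingEnd ℂ (ψ i θ₀) with hcdef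
  have hc : ∀ i, c i ≠ 0 := by
    intro i
    simp only [hcdef, starRingEnd_apply]
    exact star_ne_zero.mpr (hψ i θ₀)
  have hdiff : ∀ i, DifferentiableAt ℝ (fun t => starRingEnd ℂ (ψ i t)) θ₀ := by
    intro i
    have : (fun t => starRingEnd ℂ (ψ i t)) = fun t => Complex.conjCLE (ψ i t) := by
      ext t; simp
    rw [this]
    exact (Complex.conjCLE.differentiable.comp (hψd i)).differentiableAt
  set D : I → (Fin m → ℝ) →L[ℝ] ℂ :=
    fun i => fderiv ℝ (fun t => starRingEnd ℂ (ψ i t)) θ₀ with hD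
  have hi : ∀ i, HasFDerivAt (fun t => starRingEnd ℂ (ψ i t)) (D i) θ₀ :=
    fun i => (hdiff i).hasFDerivAt
  -- numerator and denominator
  have hnum : HasFDerivAt (fun θ => ∑ i, starRingEnd ℂ (ψ i θ) * ((c i)⁻¹ * E i))
      (∑ i, ((c i)⁻¹ * E i) • D i) θ₀ :=
    HasFDerivAt.fun_sum (fun i _ => (hi i).mul_const _)
  have hden : HasFDerivAt (fun θ => ∑ i, starRingEnd ℂ (ψ i θ) * (c i)⁻¹)
      (∑ i, (c i)⁻¹ • D i) θ₀ :=
    HasFDerivAt.fun_sum (fun i _ => (hi i).mul_const _)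
  set N : ℂ := (Fintype.card I : ℂ) with hN
  have hden0 : (∑ i, starRingEnd ℂ (ψ i θ₀) * (c i)⁻¹) = N := by
    rw [hN]
    rw [Finset.sum_congr rfl (fun i _ => mul_inv_cancel₀ (hc i))]
    simp
  have hNne : N ≠ 0 := by
    rw [hN]
    exact_mod_cast Nat.cast_ne_zero.mpr Fintype.card_ne_zero
  have hdne : (∑ i, starRingEnd ℂ (ψ i θ₀) * (c i)⁻¹) ≠ 0 := by rw [hden0]; exact hNne
  have hinv : HasFDerivAt (fun θ => (∑ i, starRingEnd ℂ (ψ i θ) * (c i)⁻¹)⁻¹)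
      ((-(ContinuousLinearMap.mulLeftRight ℝ ℂ
          (∑ i, starRingEnd ℂ (ψ i θ₀) * (c i)⁻¹)⁻¹
          (∑ i, starRingEnd ℂ (ψ i θ₀) * (c i)⁻¹)⁻¹)).comp
        (∑ i, (c i)⁻¹ • D i)) θ₀ :=
    (hasFDerivAt_inv' hdne).comp θ₀ hden
  have hF := hnum.mul hinv
  have hGfun : G = fun θ => 2 * ((∑ i, starRingEnd ℂ (ψ i θ) * ((c i)⁻¹ * E i)) *
      (∑ i, starRingEnd ℂ (ψ i θ) * (c i)⁻¹)⁻¹).re := by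
    funext θ
    rw [hG θ]
    have e1 : (∑ i, (starRingEnd ℂ (ψ i θ) / starRingEnd ℂ (ψ i θ₀)) * E i)
        = ∑ i, starRingEnd ℂ (ψ i θ) * ((c i)⁻¹ * E i) :=
      Finset.sum_congr rfl (fun i _ => by rw [div_eq_mul_inv]; ring)
    have e2 : (∑ i, starRingEnd ℂ (ψ i θ) / starRingEnd ℂ (ψ i θ₀))
        = ∑ i, starRingEnd ℂ (ψ i θ) * (c i)⁻¹ :=
      Finset.sum_congr rfl (fun i _ => by rw [div_eq_mul_inv])
    rw [e1, e2, div_eq_mul_inv]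
  have hGder : HasFDerivAt (fun θ => 2 * ((∑ i, starRingEnd ℂ (ψ i θ) * ((c i)⁻¹ * E i)) *
        (∑ i, starRingEnd ℂ (ψ i θ) * (c i)⁻¹)⁻¹).re)
      ((2 : ℝ) • Complex.reCLM.comp
        ((∑ i, starRingEnd ℂ (ψ i θ₀) * ((c i)⁻¹ * E i)) •
            (-(ContinuousLinearMap.mulLeftRight ℝ ℂ
                (∑ i, starRingEnd ℂ (ψ i θ₀) * (c i)⁻¹)⁻¹
                (∑ i, starRingEnd ℂ (ψ i θ₀) * (c i)⁻¹)⁻¹)).comp (∑ i, (c i)⁻¹ • D i) +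
          (∑ i, starRingEnd ℂ (ψ i θ₀) * (c i)⁻¹)⁻¹ • ∑ i, ((c i)⁻¹ * E i) • D i)) θ₀ :=
    (Complex.reCLM.hasFDerivAt.comp θ₀ hF).const_mul (2 : ℝ)
  rw [hGfun]
  rw [hGder.fderiv]
  -- evaluate the continuous linear maps at `v`
  simp only [ContinuousLinearMap.coe_smul', Pi.smul_apply, ContinuousLinearMap.coe_comp',
    Function.comp_apply, ContinuousLinearMap.add_apply, ContinuousLinearMap.smul_apply,
    ContinuousLinearMap.neg_apply, ContinuousLinearMap.mulLeftRight_apply,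
    ContinuousLinearMap.coe_sum', Finset.sum_apply, Complex.reCLM_apply, smul_eq_mul,
    hden0]
  have key : (∑ i, starRingEnd ℂ (ψ i θ₀) * ((c i)⁻¹ * E i)) *
        (-((N⁻¹ * ∑ i, (c i)⁻¹ * D i v) * N⁻¹)) + N⁻¹ * (∑ i, (c i)⁻¹ * E i * D i v)
      = N⁻¹ * (∑ i, (D i v / c i) * E i) - (N⁻¹ * ∑ i, E i) * (N⁻¹ * ∑ i, D i v / c i) := by
    have h1 : (∑ i, starRingEnd ℂ (ψ i θ₀) * ((c i)⁻¹ * E i)) = ∑ i, E i := by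
      refine Finset.sum_congr rfl (fun i _ => ?_)
      rw [show starRingEnd ℂ (ψ i θ₀) = c i from rfl, ← mul_assoc,
        mul_inv_cancel₀ (hc i), one_mul]
    have h2 : (∑ i, (c i)⁻¹ * D i v) = ∑ i, D i v / c i :=
      Finset.sum_congr rfl (fun i _ => by rw [div_eq_mul_inv]; ring)
    have h3 : (∑ i, ((c i)⁻¹ * E i) * D i v) = ∑ i, (D i v / c i) * E i :=
      Finset.sum_congr rfl (fun i _ => by rw [div_eq_mul_inv]; ring)
    rw [h1, h2, h3]
    ring
  rw [key]
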